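/- Let R be a local ring with maximal ideal M, and n ≥ 3. If g ∈ GL_n(R) can be written g = x h y with x strictly upper triangular with off-diagonal entries in M, h block-diagonal (diagonal), and y strictly lower triangular with entries in M, and g commutes with all elementary matrices e_{ij}(1), then x = y = 1, i.e. g is diagonal. -/

import Mathlib

/-- Over a local ring `R` with maximal ideal `M` and `n ≥ 3`: if `g ∈ GL_n(R)` is written
`g = x h y` with `x` unipotent upper triangular with off-diagonal entries in `M`, `h`
diagonal, and `y` unipotent lower triangular with off-diagonal entries in `M`, and `g`
commutes with all elementary matrices `e_{ij}(1)`, then `x = y = 1`, i.e. `g` is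
diagonal. -/
theorem stmt_17 (R : Type*) [CommRing R] [IsLocalRing R] (n : ℕ) (hn : 3 ≤ n)
    (x h y : Matrix (Fin n) (Fin n) R)
    (hxdiag : ∀ i, x i i = 1) (hxlow : ∀ i j : Fin n, j < i → x i j = 0)
    (hxM : ∀ i j : Fin n, i < j → x i j ∈ IsLocalRing.maximalIdeal R)
    (hh : ∀ i j : Fin n, i ≠ j → h i j = 0)
    (hydiag : ∀ i, y i i = 1) (hyup : ∀ i j : Fin n, i < j → y i j = 0)
    (hyM : ∀ i j : Fin n, j < i → y i j ∈ IsLocalRing.maximalIdeal R)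
    (hunit : IsUnit (x * h * y).det)
    (hcomm : ∀ i j : Fin n, i ≠ j →
      (x * h * y) * Matrix.transvection i j 1 = Matrix.transvection i j 1 * (x * h * y)) :
    x = 1 ∧ y = 1 := by
  -- the product formula
  have hmul : ∀ i j, (x * h * y) i j = ∑ l, x i l * h l l * y l j := by
    intro i j
    rw [Matrix.mul_apply]
    refine Finset.sum_congr rfl fun l _ => ?_
    rw [Matrix.mul_apply, Finset.sum_eq_single l]
    · intro k _ hk
      rw [hh k l hk, mul_zero]
    · intro hl; exact absurd (Finset.mem_univ l) hl
  -- g := x*h*y is diagonal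
  have hgdiag : ∀ k i : Fin n, k ≠ i → (x * h * y) k i = 0 := by
    intro k i hki
    have h1 := hcomm i k (Ne.symm hki)
    have h2 := congrFun (congrFun h1 k) k
    simp only [Matrix.transvection, Matrix.mul_add, Matrix.add_mul, Matrix.mul_one,
      Matrix.one_mul, Matrix.add_apply,
      Matrix.mul_single_apply_same,
      Matrix.single_mul_apply_of_ne (a := k) (b := k) (h := hki)] at h2
    linear_combination h2
  -- each h j j is a unit
  have hdetx : x.det = 1 := by
    rw [Matrix.det_of_upperTriangular (M := x) (fun i j hij => hxlow i j hij)]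
    simp [hxdiag]
  have hdety : y.det = 1 := by
    rw [Matrix.det_of_lowerTriangular y (fun i j hij => hyup i j hij)]
    simp [hydiag]
  have hdeth : IsUnit h.det := by
    have : (x * h * y).det = x.det * h.det * y.det := by
      rw [Matrix.det_mul, Matrix.det_mul]
    rw [this, hdetx, hdety, one_mul, mul_one] at hunit
    exact hunit
  have hhunit : ∀ j : Fin n, IsUnit (h j j) := by
    intro j
    have hd : h.det = ∏ i, h i i := by
      apply Matrix.det_of_upperTriangular (M := h)
      intro a b hab
      exact hh a b (ne_of_gt hab)
    rw [hd] at hdeth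
    exact isUnit_of_dvd_unit (Finset.dvd_prod_of_mem (fun i => h i i) (Finset.mem_univ j)) hdeth
  -- x is the identity: downward induction on column
  have key : ∀ m : ℕ, ∀ i j : Fin n, i < j → n - 1 - (j : ℕ) ≤ m → x i j = 0 := by
    intro m
    induction m with
    | zero =>
      intro i j hij hj
      have hjval : (j : ℕ) = n - 1 := by omega
      have hsum := hmul i j
      rw [hgdiag i j (ne_of_lt hij)] at hsum
      rw [Finset.sum_eq_single j] at hsum
      · rw [hydiag j] at hsum
        refine (hhunit j).mul_left_cancel ?_
        rw [mul_zero]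
        linear_combination -hsum
      · intro l _ hl
        rcases lt_or_gt_of_ne hl with hlj | hlj
        · rw [hyup l j hlj, mul_zero]
        · exfalso; have := l.isLt; omega
      · intro hl; exact absurd (Finset.mem_univ j) hl
    | succ m ih =>
      intro i j hij hj
      have hsum := hmul i j
      rw [hgdiag i j (ne_of_lt hij)] at hsum
      rw [Finset.sum_eq_single j] at hsum
      · rw [hydiag j] at hsum
        refine (hhunit j).mul_left_cancel ?_
        rw [mul_zero]
        linear_combination -hsum
      · intro l _ hl
        rcases lt_or_gt_of_ne hl with hlj | hlj
        · rw [hyup l j hlj, mul_zero]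
        · have hx0 : x i l = 0 := by
            apply ih i l (lt_trans hij hlj)
            have := l.isLt
            omega
          rw [hx0, zero_mul, zero_mul]
      · intro hl; exact absurd (Finset.mem_univ j) hl
  have hx1 : x = 1 := by
    ext i j
    rcases lt_trichotomy i j with hij | hij | hij
    · rw [key (n - 1 - (j : ℕ)) i j hij le_rfl, Matrix.one_apply_ne (ne_of_lt hij)]
    · rw [hij, hxdiag, Matrix.one_apply_eq]
    · rw [hxlow i j hij, Matrix.one_apply_ne (ne_of_gt hij)]
  refine ⟨hx1, ?_⟩
  ext i j
  rcases lt_trichotomy i j with hij | hij | hij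
  · rw [hyup i j hij, Matrix.one_apply_ne (ne_of_lt hij)]
  · rw [hij, hydiag, Matrix.one_apply_eq]
  · -- y i j = 0 for j < i, using x = 1
    have hsum := hmul i j
    rw [hgdiag i j (ne_of_gt hij), hx1] at hsum
    rw [Finset.sum_eq_single i] at hsum
    · rw [Matrix.one_apply_eq, one_mul] at hsum
      have hy0 : y i j = 0 := (hhunit i).mul_left_cancel
        (by rw [mul_zero]; linear_combination -hsum)
      rw [hy0, Matrix.one_apply_ne (ne_of_gt hij)]
    · intro l _ hl
      rw [Matrix.one_apply_ne (Ne.symm hl), zero_mul, zero_mul]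
    · intro hl; exact absurd (Finset.mem_univ i) hl
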